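/- Let (X,d,μ) be a metric measure space with μ Borel regular, doubling and σ-finite. If the differentials have dimension at most N₀, i.e. every (N₀+1)-tuple of real-valued Lipschitz functions on X is dependent to first order at μ-almost every point, then X admits a measurable differentiable structure whose dimension is at most N₀. -/

import Mathlib

open Metric MeasureTheory Filter Set
open scoped NNReal ENNReal

/-- The variation of `f` on the ball `B(x,r)`: `sup { |f y - f x| / r : y ∈ B(x,r) }`. -/
noncomputable def varBall {X : Type*} [MetricSpace X] (f : X → ℝ) (x : X) (r : ℝ) : ℝ :=
  sSup ((fun y => |f y - f x| / r) '' Metric.ball x r)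

/-- Lower pointwise Lipschitz constant `lip_x f`. -/
noncomputable def lipLow {X : Type*} [MetricSpace X] (f : X → ℝ) (x : X) : ℝ :=
  Filter.liminf (fun r => varBall f x r) (nhdsWithin 0 (Set.Ioi (0:ℝ)))

/-- Upper pointwise Lipschitz constant `Lip_x f`. -/
noncomputable def lipUp {X : Type*} [MetricSpace X] (f : X → ℝ) (x : X) : ℝ :=
  Filter.limsup (fun r => varBall f x r) (nhdsWithin 0 (Set.Ioi (0:ℝ)))

/-- `f` is a real-valued Lipschitz function. -/
def IsLip {X : Type*} [MetricSpace X] (f : X → ℝ) : Prop := ∃ K : ℝ≥0, LipschitzWith K f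

/-- `μ` is doubling with constant `C`. -/
def DoublingWith {X : Type*} [MetricSpace X] [MeasurableSpace X] (μ : Measure X) (C : ℝ≥0) :
    Prop :=
  ∀ (x : X) (r : ℝ), 0 < r → μ (Metric.ball x (2 * r)) ≤ (C : ℝ≥0∞) * μ (Metric.ball x r)

/-- `(X, μ)` admits a `p`-Poincaré inequality with constant `L`. -/
def PoincareIneq {X : Type*} [MetricSpace X] [MeasurableSpace X] (μ : Measure X) (p L : ℝ) :
    Prop :=
  (∀ (x : X) (r : ℝ), 0 < r → 0 < μ (Metric.ball x r) ∧ μ (Metric.ball x r) < ⊤) ∧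
  ∀ f : X → ℝ, IsLip f → ∀ (x : X) (r : ℝ), 0 < r →
    ⨍ y in Metric.ball x r, |f y - ⨍ z in Metric.ball x r, f z ∂μ| ∂μ ≤
      L * r * (⨍ z in Metric.ball x (L * r), (lipLow f z) ^ p ∂μ) ^ (1 / p)

/-- An `N`-tuple of functions is dependent to first order at `x`. -/
def DependentAt {X : Type*} [MetricSpace X] {N : ℕ} (f : Fin N → X → ℝ) (x : X) : Prop :=
  ∃ l : Fin N → ℝ, l ≠ 0 ∧ lipUp (fun y => ∑ i, l i * f i y) x = 0

/-- A measurable differentiable structure of dimension at most `N₀`. -/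
def HasMDS {X : Type*} [MetricSpace X] [MeasurableSpace X] (μ : Measure X) (N₀ : ℕ) : Prop :=
  ∃ (ι : Type) (_ : Countable ι) (U : ι → Set X) (N : ι → ℕ)
      (φ : (i : ι) → Fin (N i) → X → ℝ),
    (∀ i, MeasurableSet (U i) ∧ 0 < μ (U i)) ∧
    μ (Set.univ \ ⋃ i, U i) = 0 ∧
    (∀ i, N i ≤ N₀) ∧
    (∀ i k, IsLip (φ i k)) ∧
    (∀ f : X → ℝ, IsLip f → ∀ i, ∃ df : X → (Fin (N i) → ℝ),
      Measurable df ∧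
      (∀ᵐ x ∂(μ.restrict (U i)),
        lipUp (fun y => f y - ∑ k, df x k * φ i k y) x = 0) ∧
      ∀ dg : X → (Fin (N i) → ℝ), Measurable dg →
        (∀ᵐ x ∂(μ.restrict (U i)),
          lipUp (fun y => f y - ∑ k, dg x k * φ i k y) x = 0) →
        (∀ᵐ x ∂(μ.restrict (U i)), df x = dg x))


/- ### Auxiliary development ### -/
set_option linter.unusedSectionVars false
set_option linter.unusedVariables false

/-- linear combination of a tuple of functions -/
noncomputable def mulSum {X : Type*} {N : ℕ} (l : Fin N → ℝ) (φ : Fin N → X → ℝ) : X → ℝ :=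
  fun y => ∑ i, l i * φ i y

section Basic
variable {X : Type*} [MetricSpace X] {g h : X → ℝ} {x : X} {r : ℝ} {K : ℝ≥0}

lemma varBall_mem_le (hg : LipschitzWith K g) (hr : 0 < r) :
    ∀ z ∈ (fun y => |g y - g x| / r) '' Metric.ball x r, z ≤ (K : ℝ) := by
  rintro z ⟨y, hy, rfl⟩
  rw [div_le_iff₀ hr]
  calc |g y - g x| ≤ K * dist y x := by
        simpa [Real.dist_eq] using hg.dist_le_mul y x
    _ ≤ K * r := by
        exact mul_le_mul_of_nonneg_left (le_of_lt (mem_ball.mp hy)) K.coe_nonneg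

lemma varBall_bddAbove' (hg : LipschitzWith K g) (hr : 0 < r) :
    BddAbove ((fun y => |g y - g x| / r) '' Metric.ball x r) :=
  ⟨K, fun z hz => varBall_mem_le hg hr z hz⟩

lemma varBall_le' (hg : LipschitzWith K g) (hr : 0 < r) : varBall g x r ≤ K :=
  Real.sSup_le (varBall_mem_le hg hr) K.coe_nonneg

lemma varBall_nonneg' (hg : LipschitzWith K g) (hr : 0 < r) : 0 ≤ varBall g x r := by
  have h0 : (0:ℝ) ∈ (fun y => |g y - g x| / r) '' Metric.ball x r :=
    ⟨x, mem_ball_self hr, by simp⟩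
  exact le_csSup (varBall_bddAbove' hg hr) h0

lemma le_varBall' (hg : LipschitzWith K g) (hr : 0 < r) {y : X} (hy : y ∈ Metric.ball x r) :
    |g y - g x| / r ≤ varBall g x r :=
  le_csSup (varBall_bddAbove' hg hr) ⟨y, hy, rfl⟩

lemma eventually_varBall_le (hg : LipschitzWith K g) :
    ∀ᶠ r in nhdsWithin (0:ℝ) (Set.Ioi 0), varBall g x r ≤ (K:ℝ) :=
  eventually_nhdsWithin_of_forall (fun r hr => varBall_le' hg hr)

lemma eventually_varBall_nonneg (hg : LipschitzWith K g) :
    ∀ᶠ r in nhdsWithin (0:ℝ) (Set.Ioi 0), 0 ≤ varBall g x r :=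
  eventually_nhdsWithin_of_forall (fun r hr => varBall_nonneg' hg hr)

lemma varBall_bddUnder' (hg : LipschitzWith K g) :
    IsBoundedUnder (· ≤ ·) (nhdsWithin (0:ℝ) (Set.Ioi 0)) (fun r => varBall g x (r : ℝ)) :=
  isBoundedUnder_of_eventually_le (eventually_varBall_le hg)

lemma varBall_bddUnder_ge' (hg : LipschitzWith K g) :
    IsBoundedUnder (· ≥ ·) (nhdsWithin (0:ℝ) (Set.Ioi 0)) (fun r => varBall g x (r : ℝ)) :=
  isBoundedUnder_of_eventually_ge (eventually_varBall_nonneg hg)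

lemma lipUp_nonneg' (hg : LipschitzWith K g) : 0 ≤ lipUp g x :=
  le_limsup_of_frequently_le ((eventually_varBall_nonneg hg).frequently) (varBall_bddUnder' hg)

lemma lipUp_le' (hg : LipschitzWith K g) : lipUp g x ≤ K :=
  limsup_le_of_le ((varBall_bddUnder_ge' hg).isCoboundedUnder_le) (eventually_varBall_le hg)

end Basic

section Basic1
variable {X : Type*} [MetricSpace X] {g h : X → ℝ} {x : X} {r : ℝ} {K K' : ℝ≥0}

/-- `c • g` is Lipschitz. -/
lemma LipschitzWith.constMulReal' (hg : LipschitzWith K g) (c : ℝ) :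
    LipschitzWith (Real.nnabs c * K) (fun y => c * g y) := by
  apply LipschitzWith.of_dist_le_mul
  intro y z
  have := hg.dist_le_mul y z
  simp only [Real.dist_eq] at *
  calc |c * g y - c * g z| = |c| * |g y - g z| := by rw [← abs_mul]; ring_nf
    _ ≤ |c| * (K * dist y z) := by
        exact mul_le_mul_of_nonneg_left this (abs_nonneg c)
    _ = (Real.nnabs c * K : ℝ≥0) * dist y z := by
        push_cast [Real.coe_nnabs]
        ring

lemma varBall_add_le (hg : LipschitzWith K g) (hh : LipschitzWith K' h) (hr : 0 < r) :
    varBall (fun y => g y + h y) x r ≤ varBall g x r + varBall h x r := by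
  apply Real.sSup_le
  · rintro z ⟨y, hy, rfl⟩
    simp only
    calc |(g y + h y) - (g x + h x)| / r ≤ (|g y - g x| + |h y - h x|) / r := by
          rw [div_le_div_iff_of_pos_right hr]
          have : (g y + h y) - (g x + h x) = (g y - g x) + (h y - h x) := by ring
          rw [this]; exact abs_add_le _ _
      _ = |g y - g x| / r + |h y - h x| / r := add_div _ _ _
      _ ≤ varBall g x r + varBall h x r :=
          add_le_add (le_varBall' hg hr hy) (le_varBall' hh hr hy)
  · exact add_nonneg (varBall_nonneg' hg hr) (varBall_nonneg' hh hr)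

lemma lipUp_add_le' (hg : LipschitzWith K g) (hh : LipschitzWith K' h) :
    lipUp (fun y => g y + h y) x ≤ lipUp g x + lipUp h x := by
  have hgh : LipschitzWith (K + K') (fun y => g y + h y) := by
    have := hg.add hh
    simpa [Pi.add_def] using this
  have step1 : lipUp (fun y => g y + h y) x ≤
      Filter.limsup (fun r => varBall g x r + varBall h x r) (nhdsWithin 0 (Set.Ioi (0:ℝ))) := by
    apply limsup_le_limsup
    · exact eventually_nhdsWithin_of_forall (fun r hr => varBall_add_le hg hh hr)
    · exact (varBall_bddUnder_ge' hgh).isCoboundedUnder_le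
    · exact isBoundedUnder_le_add (varBall_bddUnder' hg) (varBall_bddUnder' hh)
  refine step1.trans ?_
  exact limsup_add_le (varBall_bddUnder_ge' hg) (varBall_bddUnder' hg)
    ((varBall_bddUnder_ge' hh).isCoboundedUnder_le) (varBall_bddUnder' hh)

end Basic1

section Basic2
variable {X : Type*} [MetricSpace X] {g h : X → ℝ} {x : X} {r : ℝ} {K K' : ℝ≥0}

lemma varBall_smul_le (hg : LipschitzWith K g) (c : ℝ) (hr : 0 < r) :
    varBall (fun y => c * g y) x r ≤ |c| * varBall g x r := by
  apply Real.sSup_le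
  · rintro z ⟨y, hy, rfl⟩
    simp only
    calc |c * g y - c * g x| / r = |c| * (|g y - g x| / r) := by
          rw [← mul_sub, abs_mul]; ring
      _ ≤ |c| * varBall g x r :=
          mul_le_mul_of_nonneg_left (le_varBall' hg hr hy) (abs_nonneg c)
  · exact mul_nonneg (abs_nonneg c) (varBall_nonneg' hg hr)

lemma lipUp_smul_le' (hg : LipschitzWith K g) (c : ℝ) :
    lipUp (fun y => c * g y) x ≤ |c| * lipUp g x := by
  have hcg := hg.constMulReal' c
  have step1 : lipUp (fun y => c * g y) x ≤
      Filter.limsup (fun r => |c| * varBall g x r) (nhdsWithin 0 (Set.Ioi (0:ℝ))) := by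
    apply limsup_le_limsup
    · exact eventually_nhdsWithin_of_forall (fun r hr => varBall_smul_le hg c hr)
    · exact (varBall_bddUnder_ge' hcg).isCoboundedUnder_le
    · exact isBoundedUnder_of ⟨|c| * K, fun r => by
        rcases le_or_gt r 0 with h | h
        · simp [varBall, Metric.ball_eq_empty.mpr h, Real.sSup_empty]
          positivity
        · exact mul_le_mul_of_nonneg_left (varBall_le' hg h) (abs_nonneg c)⟩
  refine step1.trans ?_
  have hmono : Monotone (fun t : ℝ => |c| * t) :=
    fun a b hab => mul_le_mul_of_nonneg_left hab (abs_nonneg c)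
  have := hmono.map_limsup_of_continuousAt (F := nhdsWithin 0 (Set.Ioi (0:ℝ)))
    (fun r => varBall g x r) ((continuous_const.mul continuous_id).continuousAt)
    (varBall_bddUnder' hg) ((varBall_bddUnder_ge' hg).isCoboundedUnder_le)
  simp only [Function.comp_def] at this
  rw [lipUp, this]

end Basic2

section MulSum
variable {X : Type*} [MetricSpace X] {x : X}

lemma lipschitzWith_sum {ι : Type*} (s : Finset ι) (φ : ι → X → ℝ) (K : ι → ℝ≥0)
    (h : ∀ i ∈ s, LipschitzWith (K i) (φ i)) :
    LipschitzWith (∑ i ∈ s, K i) (fun y => ∑ i ∈ s, φ i y) := by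
  classical
  induction s using Finset.induction_on with
  | empty => simpa using LipschitzWith.const (0:ℝ)
  | insert _ _ hnotmem ih =>
    rename_i a s'
    simp only [Finset.sum_insert hnotmem]
    have h1 := h a (Finset.mem_insert_self a s')
    have h2 := ih (fun i hi => h i (Finset.mem_insert_of_mem hi))
    have := h1.add h2
    simpa [Pi.add_def] using this

lemma lipschitzWith_mulSum' {N : ℕ} (l : Fin N → ℝ) (φ : Fin N → X → ℝ) (K : Fin N → ℝ≥0)
    (hφ : ∀ i, LipschitzWith (K i) (φ i)) :
    LipschitzWith (∑ i, Real.nnabs (l i) * K i) (mulSum l φ) := by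
  apply lipschitzWith_sum Finset.univ (fun i => fun y => l i * φ i y)
    (fun i => Real.nnabs (l i) * K i)
  exact fun i _ => (hφ i).constMulReal' (l i)

lemma lipUp_mulSum_le' {N : ℕ} (l : Fin N → ℝ) (φ : Fin N → X → ℝ) (K : Fin N → ℝ≥0)
    (hφ : ∀ i, LipschitzWith (K i) (φ i)) :
    lipUp (mulSum l φ) x ≤ ‖l‖ * ∑ i, (K i : ℝ) := by
  refine (lipUp_le' (lipschitzWith_mulSum' l φ K hφ)).trans ?_
  push_cast [Real.coe_nnabs]
  rw [Finset.mul_sum]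
  apply Finset.sum_le_sum
  intro i _
  exact mul_le_mul_of_nonneg_right (norm_le_pi_norm l i) (K i).coe_nonneg

lemma mulSum_sub {N : ℕ} (l l' : Fin N → ℝ) (φ : Fin N → X → ℝ) (y : X) :
    mulSum l φ y - mulSum l' φ y = mulSum (l - l') φ y := by
  simp [mulSum, sub_mul, Finset.sum_sub_distrib]

/-- `lipUp g x ≤ lipUp h x + lipUp (g - h) x`. -/
lemma lipUp_le_add_sub' {g h : X → ℝ} {K K' : ℝ≥0} (hh : LipschitzWith K h)
    (hgh : LipschitzWith K' (fun y => g y - h y)) :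
    lipUp g x ≤ lipUp h x + lipUp (fun y => g y - h y) x := by
  have := lipUp_add_le' (x := x) hh hgh
  have e : (fun y => h y + (g y - h y)) = g := funext (fun y => by ring)
  rwa [e] at this

lemma lipUp_mulSum_lipschitz {N : ℕ} (φ : Fin N → X → ℝ) (K : Fin N → ℝ≥0)
    (hφ : ∀ i, LipschitzWith (K i) (φ i)) (l l' : Fin N → ℝ) :
    |lipUp (mulSum l φ) x - lipUp (mulSum l' φ) x| ≤ ‖l - l'‖ * ∑ i, (K i : ℝ) := by
  have key : ∀ a b : Fin N → ℝ,
      lipUp (mulSum a φ) x - lipUp (mulSum b φ) x ≤ ‖a - b‖ * ∑ i, (K i : ℝ) := by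
    intro a b
    have hdiff : LipschitzWith (∑ i, Real.nnabs ((a - b) i) * K i)
        (fun y => mulSum a φ y - mulSum b φ y) := by
      have := lipschitzWith_mulSum' (a - b) φ K hφ
      have e : (fun y => mulSum a φ y - mulSum b φ y) = mulSum (a - b) φ :=
        funext (fun y => mulSum_sub a b φ y)
      rwa [e]
    have h1 : lipUp (mulSum a φ) x ≤ lipUp (mulSum b φ) x
        + lipUp (fun y => mulSum a φ y - mulSum b φ y) x :=
      lipUp_le_add_sub' (lipschitzWith_mulSum' b φ K hφ) hdiff
    have h2 : lipUp (fun y => mulSum a φ y - mulSum b φ y) x ≤ ‖a - b‖ * ∑ i, (K i : ℝ) := by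
      have e : (fun y => mulSum a φ y - mulSum b φ y) = mulSum (a - b) φ :=
        funext (fun y => mulSum_sub a b φ y)
      rw [e]
      exact lipUp_mulSum_le' (a - b) φ K hφ
    linarith
  rw [abs_sub_le_iff]
  constructor
  · exact key l l'
  · have := key l' l
    rwa [show l' - l = -(l - l') by ring, norm_neg] at this

lemma continuous_lipUp_mulSum' {N : ℕ} (φ : Fin N → X → ℝ) (K : Fin N → ℝ≥0)
    (hφ : ∀ i, LipschitzWith (K i) (φ i)) :
    Continuous (fun l : Fin N → ℝ => lipUp (mulSum l φ) x) := by
  have : LipschitzWith (⟨∑ i, (K i : ℝ), by positivity⟩) (fun l : Fin N → ℝ => lipUp (mulSum l φ) x) := by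
    apply LipschitzWith.of_dist_le_mul
    intro l l'
    rw [Real.dist_eq, dist_eq_norm]
    exact (lipUp_mulSum_lipschitz φ K hφ l l').trans (by rw [mul_comm]; exact le_rfl)
  exact this.continuous

/-- If `lipUp (c * g) x = 0` with `c ≠ 0` then `lipUp g x = 0`. -/
lemma lipUp_eq_zero_of_smul' {g : X → ℝ} {K : ℝ≥0} (hg : LipschitzWith K g) {c : ℝ} (hc : c ≠ 0)
    (h : lipUp (fun y => c * g y) x = 0) : lipUp g x = 0 := by
  have hcg := hg.constMulReal' c
  have h1 : lipUp (fun y => c⁻¹ * (c * g y)) x ≤ |c⁻¹| * lipUp (fun y => c * g y) x :=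
    lipUp_smul_le' hcg c⁻¹
  have e : (fun y => c⁻¹ * (c * g y)) = g := funext (fun y => by field_simp)
  rw [e, h, mul_zero] at h1
  exact le_antisymm h1 (lipUp_nonneg' hg)

end MulSum

section Meas
variable {X : Type*} [MetricSpace X] {g : X → ℝ} {K : ℝ≥0}

lemma lsc_varBall (hg : LipschitzWith K g) {r : ℝ} (hr : 0 < r) :
    LowerSemicontinuous (fun x => varBall g x r) := by
  intro x t ht
  -- t < varBall g x r, find witness
  obtain ⟨z, hz, htz⟩ : ∃ z ∈ (fun y => |g y - g x| / r) '' Metric.ball x r, t < z := by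
    apply exists_lt_of_lt_csSup _ ht
    exact ⟨_, ⟨x, mem_ball_self hr, rfl⟩⟩
  obtain ⟨y, hy, rfl⟩ := hz
  have h1 : ∀ᶠ x' in nhds x, y ∈ Metric.ball x' r := by
    have : ∀ᶠ x' in nhds x, dist y x' < r := by
      have hcont : Continuous (fun x' => dist y x') := continuous_const.dist continuous_id
      exact hcont.continuousAt.eventually_lt continuousAt_const (by simpa [mem_ball] using hy)
    simpa [mem_ball] using this
  have h2 : ∀ᶠ x' in nhds x, t < |g y - g x'| / r := by
    have hcont : Continuous (fun x' => |g y - g x'| / r) := by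
      apply Continuous.div_const
      exact (continuous_const.sub hg.continuous).abs
    exact continuousAt_const.eventually_lt hcont.continuousAt htz
  filter_upwards [h1, h2] with x' hy' ht'
  exact ht'.trans_le (le_varBall' hg hr hy')

/-- sup of `varBall` over `r ∈ (0, ε)`. -/
noncomputable def varSup {X : Type*} [MetricSpace X] (g : X → ℝ) (x : X) (ε : ℝ) : ℝ :=
  sSup ((fun r => varBall g x r) '' Set.Ioo 0 ε)

lemma varSup_bddAbove (hg : LipschitzWith K g) (x : X) (ε : ℝ) :
    ∀ z ∈ (fun r => varBall g x r) '' Set.Ioo 0 ε, z ≤ (K:ℝ) := by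
  rintro z ⟨r, hr, rfl⟩
  exact varBall_le' hg hr.1

lemma le_varSup (hg : LipschitzWith K g) (x : X) {ε r : ℝ} (hr : r ∈ Set.Ioo 0 ε) :
    varBall g x r ≤ varSup g x ε :=
  le_csSup ⟨K, varSup_bddAbove hg x ε⟩ ⟨r, hr, rfl⟩

lemma varSup_le (hg : LipschitzWith K g) (x : X) {ε a : ℝ} (ha : 0 ≤ a)
    (h : ∀ r ∈ Set.Ioo (0:ℝ) ε, varBall g x r ≤ a) : varSup g x ε ≤ a := by
  apply Real.sSup_le _ ha
  rintro z ⟨r, hr, rfl⟩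
  exact h r hr

lemma lsc_varSup (hg : LipschitzWith K g) {ε : ℝ} (hε : 0 < ε) :
    LowerSemicontinuous (fun x => varSup g x ε) := by
  intro x t ht
  obtain ⟨z, hz, htz⟩ : ∃ z ∈ (fun r => varBall g x r) '' Set.Ioo 0 ε, t < z := by
    apply exists_lt_of_lt_csSup _ ht
    exact ⟨_, ⟨ε/2, ⟨by positivity, half_lt_self hε⟩, rfl⟩⟩
  obtain ⟨r, hr, rfl⟩ := hz
  filter_upwards [lsc_varBall hg hr.1 x t htz] with x' h'
  exact h'.trans_le (le_varSup hg x' hr)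

lemma lipUp_eq_iInf_varSup (hg : LipschitzWith K g) (x : X) :
    lipUp g x = ⨅ n : ℕ, varSup g x (1 / (n + 1)) := by
  have hnn : ∀ n : ℕ, (0:ℝ) < 1 / (n + 1) := fun n => by positivity
  have hbddB : BddBelow (Set.range fun n : ℕ => varSup g x (1 / (n + 1))) := by
    refine ⟨0, ?_⟩
    rintro z ⟨n, rfl⟩
    exact le_trans (varBall_nonneg' hg (half_pos (hnn n)))
      (le_varSup hg x ⟨half_pos (hnn n), half_lt_self (hnn n)⟩)
  apply le_antisymm
  · apply le_ciInf
    intro n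
    apply limsup_le_of_le ((varBall_bddUnder_ge' hg).isCoboundedUnder_le)
    filter_upwards [Ioo_mem_nhdsGT (hnn n)] with r hr
    exact le_varSup hg x hr
  · by_contra hcon
    push_neg at hcon
    obtain ⟨b, hb1, hb2⟩ := exists_between hcon
    have hev : ∀ᶠ r in nhdsWithin (0:ℝ) (Set.Ioi 0), varBall g x r < b :=
      eventually_lt_of_limsup_lt hb1 (varBall_bddUnder' hg)
    obtain ⟨u, hu, hsub⟩ := mem_nhdsGT_iff_exists_Ioo_subset.mp hev
    obtain ⟨n, hn⟩ := exists_nat_one_div_lt (show (0:ℝ) < u from hu)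
    have hwn : varSup g x (1 / (n + 1)) ≤ b := by
      apply varSup_le hg x
      · have : (0:ℝ) ≤ lipUp g x := lipUp_nonneg' hg
        linarith
      · intro r hrIoo
        have : r ∈ Set.Ioo (0:ℝ) u := ⟨hrIoo.1, hrIoo.2.trans hn⟩
        exact le_of_lt (hsub this)
    have : (⨅ n : ℕ, varSup g x (1 / (n + 1))) ≤ b := le_trans (ciInf_le hbddB n) hwn
    linarith
end Meas

section MeasInf
variable {α : Type*} [MeasurableSpace α]

/-- partial minima -/
noncomputable def pmin (u : ℕ → α → ℝ) : ℕ → α → ℝ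
  | 0 => u 0
  | (m+1) => fun x => min (pmin u m x) (u (m+1) x)

lemma pmin_measurable {u : ℕ → α → ℝ} (hm : ∀ n, Measurable (u n)) :
    ∀ m, Measurable (pmin u m) := by
  intro m
  induction m with
  | zero => exact hm 0
  | succ m ih => exact ih.min (hm (m+1))

lemma pmin_le {u : ℕ → α → ℝ} (m : ℕ) (x : α) : pmin u m x ≤ u m x := by
  cases m with
  | zero => exact le_refl _
  | succ m => exact min_le_right _ _

lemma pmin_antitone {u : ℕ → α → ℝ} (x : α) : Antitone (fun m => pmin u m x) := by
  apply antitone_nat_of_succ_le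
  intro m
  exact min_le_left _ _

lemma le_pmin {u : ℕ → α → ℝ} {b : ℝ} {x : α} (hb : ∀ n, b ≤ u n x) :
    ∀ m, b ≤ pmin u m x := by
  intro m
  induction m with
  | zero => exact hb 0
  | succ m ih => exact le_min ih (hb (m+1))

lemma measurable_iInf_nat' {u : ℕ → α → ℝ} (hm : ∀ n, Measurable (u n))
    (hb : ∀ x, BddBelow (Set.range fun n => u n x)) :
    Measurable (fun x => ⨅ n, u n x) := by
  apply measurable_of_tendsto_metrizable (f := fun m => pmin u m)
    (fun m => pmin_measurable hm m)
  rw [tendsto_pi_nhds]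
  intro x
  have hbd : BddBelow (Set.range fun m => pmin u m x) := by
    obtain ⟨b, hbb⟩ := hb x
    refine ⟨b, ?_⟩
    rintro z ⟨m, rfl⟩
    exact le_pmin (fun n => hbb ⟨n, rfl⟩) m
  have htend : Filter.Tendsto (fun m => pmin u m x) Filter.atTop
      (nhds (⨅ m, pmin u m x)) := tendsto_atTop_ciInf (pmin_antitone x) hbd
  have heq : (⨅ m, pmin u m x) = ⨅ n, u n x := by
    apply le_antisymm
    · apply le_ciInf
      intro n
      exact le_trans (ciInf_le hbd n) (pmin_le n x)
    · apply le_ciInf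
      intro m
      exact le_pmin (fun n => ciInf_le (hb x) n) m
  rwa [heq] at htend

end MeasInf

section MeasLip
variable {X : Type*} [MetricSpace X] [MeasurableSpace X] [OpensMeasurableSpace X]
  {g : X → ℝ} {K : ℝ≥0}

lemma measurable_lipUp' (hg : LipschitzWith K g) : Measurable (fun x => lipUp g x) := by
  have : (fun x => lipUp g x) = fun x => ⨅ n : ℕ, varSup g x (1 / (n + 1)) :=
    funext (fun x => lipUp_eq_iInf_varSup hg x)
  rw [this]
  apply measurable_iInf_nat'
  · intro n
    exact (lsc_varSup hg (by positivity)).measurable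
  · intro x
    refine ⟨0, ?_⟩
    rintro z ⟨n, rfl⟩
    have h : (0:ℝ) < 1 / (n + 1) := by positivity
    exact le_trans (varBall_nonneg' hg (half_pos h)) (le_varSup hg x ⟨half_pos h, half_lt_self h⟩)
end MeasLip

section Selection
variable {α : Type*} [MeasurableSpace α] {N : ℕ}

local notation "V" => (Fin N → ℝ)

/-- If `F ≥ 0` is continuous on compact nonempty `C` and gets below `1/(m+1)` for every `m`,
it attains `0`. -/
lemma exists_zero_of_forall_lt' {V' : Type*} [MetricSpace V'] {C : Set V'} (hC : IsCompact C)
    (hne : C.Nonempty) {F : V' → ℝ} (hcont : Continuous F) (h0 : ∀ c, 0 ≤ F c)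
    (h : ∀ m : ℕ, ∃ c ∈ C, F c < 1 / (m + 1)) : ∃ c ∈ C, F c = 0 := by
  obtain ⟨c₀, hc₀, hmin⟩ := hC.exists_isMinOn hne hcont.continuousOn
  refine ⟨c₀, hc₀, le_antisymm ?_ (h0 c₀)⟩
  by_contra hpos
  push_neg at hpos
  obtain ⟨m, hm⟩ := exists_nat_one_div_lt hpos
  obtain ⟨c, hcC, hc⟩ := h m
  have := isMinOn_iff.mp hmin c hcC
  have hcast : (1:ℝ) / (m + 1) = 1 / ((m:ℝ) + 1) := by norm_num
  linarith [hc]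

/-- The set where a jointly nice function has a zero in a compact set is measurable. -/
lemma measurableSet_exists_zero' {C : Set V} (hC : IsCompact C) {F : α → V → ℝ}
    (hFx : ∀ c, Measurable (fun x => F x c)) (hFc : ∀ x, Continuous (F x))
    (h0 : ∀ x c, 0 ≤ F x c) :
    MeasurableSet {x | ∃ c ∈ C, F x c = 0} := by
  rcases C.eq_empty_or_nonempty with rfl | hne
  · simp
  haveI : Nonempty C := hne.to_subtype
  obtain ⟨u, hu⟩ := TopologicalSpace.exists_dense_seq C
  set e : ℕ → V := fun n => (u n : V) with he
  have heC : ∀ n, e n ∈ C := fun n => (u n).2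
  have key : {x | ∃ c ∈ C, F x c = 0} = {x | (⨅ n, F x (e n)) = 0} := by
    ext x
    simp only [Set.mem_setOf_eq]
    have hbdd : BddBelow (Set.range fun n => F x (e n)) :=
      ⟨0, by rintro z ⟨n, rfl⟩; exact h0 x (e n)⟩
    constructor
    · rintro ⟨c, hcC, hc0⟩
      apply le_antisymm _ (le_ciInf (fun n => h0 x (e n)))
      by_contra hpos
      push_neg at hpos
      -- find e n close to c so that F x (e n) < inf
      have hcont := (hFc x).continuousAt (x := c)
      have : ∀ᶠ c' in nhds c, F x c' < ⨅ n, F x (e n) := by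
        apply hcont.eventually_lt continuousAt_const
        rwa [hc0]
      obtain ⟨ε, hε, hball⟩ := Metric.eventually_nhds_iff_ball.mp this
      obtain ⟨n, hn⟩ := hu.exists_dist_lt ⟨c, hcC⟩ hε
      have hdist : dist (e n) c < ε := by
        have := hn
        rw [Subtype.dist_eq] at this
        simpa [dist_comm] using this
      have := hball (e n) (by simpa [Metric.mem_ball] using hdist)
      exact absurd (ciInf_le hbdd n) (not_le.mpr this)
    · intro hinf
      obtain ⟨c₀, hc₀, hmin⟩ := hC.exists_isMinOn hne (hFc x).continuousOn
      refine ⟨c₀, hc₀, le_antisymm ?_ (h0 x c₀)⟩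
      have : F x c₀ ≤ ⨅ n, F x (e n) :=
        le_ciInf (fun n => isMinOn_iff.mp hmin (e n) (heC n))
      rwa [hinf] at this
  rw [key]
  have : Measurable (fun x => ⨅ n, F x (e n)) :=
    measurable_iInf_nat' (fun n => hFx (e n))
      (fun x => ⟨0, by rintro z ⟨n, rfl⟩; exact h0 x (e n)⟩)
  exact this (measurableSet_singleton 0)
end Selection

section Selection2
variable {α : Type*} [MeasurableSpace α] {N : ℕ}

local notation "V" => (Fin N → ℝ)

/-- Measurable selection of the unique zero. -/
lemma measurable_unique_zero_selection' {E : Set α} (hE : MeasurableSet E) (M : ℝ)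
    {F : α → V → ℝ} (hFx : ∀ c, Measurable (fun x => F x c)) (hFc : ∀ x, Continuous (F x))
    (h0 : ∀ x c, 0 ≤ F x c)
    (hex : ∀ x ∈ E, ∃ c : V, ‖c‖ ≤ M ∧ F x c = 0)
    (huniq : ∀ x ∈ E, ∀ c c' : V, F x c = 0 → F x c' = 0 → c = c') :
    ∃ df : α → V, Measurable df ∧ (∀ x ∈ E, F x (df x) = 0) ∧ ∀ x ∉ E, df x = 0 := by
  classical
  set df : α → V := fun x =>
    if h : x ∈ E then (hex x h).choose else 0 with hdf
  have hdfE : ∀ x (h : x ∈ E), df x = (hex x h).choose := by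
    intro x h; simp [hdf, h]
  have hdf0 : ∀ x ∉ E, df x = 0 := by
    intro x h; simp [hdf, h]
  have hzero : ∀ x (h : x ∈ E), F x (df x) = 0 := by
    intro x h; rw [hdfE x h]; exact (hex x h).choose_spec.2
  have hnorm : ∀ x (h : x ∈ E), ‖df x‖ ≤ M := by
    intro x h; rw [hdfE x h]; exact (hex x h).choose_spec.1
  refine ⟨df, ?_, fun x h => hzero x h, hdf0⟩
  -- measurability
  obtain ⟨D, hDc, hDd⟩ := TopologicalSpace.exists_countable_dense V
  apply measurable_of_isOpen
  intro U hU
  have hZmeas : ∀ (q : V) (ρ : ℚ), MeasurableSet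
      {x | ∃ c ∈ Metric.closedBall q ρ ∩ Metric.closedBall 0 M, F x c = 0} := by
    intro q ρ
    exact measurableSet_exists_zero'
      ((isCompact_closedBall q (ρ:ℝ)).inter_right Metric.isClosed_closedBall) hFx hFc h0
  -- the union over small closed balls inside U
  set W : Set α := ⋃ (q ∈ D) (ρ : ℚ) (_ : Metric.closedBall q (ρ:ℝ) ⊆ U),
      {x | ∃ c ∈ Metric.closedBall q (ρ:ℝ) ∩ Metric.closedBall 0 M, F x c = 0} with hW
  have hWmeas : MeasurableSet W := by
    apply MeasurableSet.biUnion hDc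
    intro q _
    apply MeasurableSet.iUnion
    intro ρ
    apply MeasurableSet.iUnion
    intro _
    exact hZmeas q ρ
  -- every point of U is in a rational closed ball inside U
  have hcover : ∀ z ∈ U, ∃ q ∈ D, ∃ ρ : ℚ, z ∈ Metric.closedBall q (ρ:ℝ) ∧
      Metric.closedBall q (ρ:ℝ) ⊆ U := by
    intro z hz
    obtain ⟨ε, hε, hball⟩ := Metric.isOpen_iff.mp hU z hz
    obtain ⟨q, hqD, hqz⟩ : ∃ q ∈ D, dist z q < ε/3 := by
      have := Metric.dense_iff.mp hDd z (ε/3) (by positivity)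
      obtain ⟨q, hq1, hq2⟩ := this
      exact ⟨q, hq2, by simpa [Metric.mem_ball, dist_comm] using hq1⟩
    obtain ⟨ρ, hρ1, hρ2⟩ := exists_rat_btwn (show ε/3 < ε/2 by linarith)
    refine ⟨q, hqD, ρ, ?_, ?_⟩
    · rw [Metric.mem_closedBall]
      exact le_of_lt (hqz.trans hρ1)
    · intro w hw
      apply hball
      rw [Metric.mem_ball]
      rw [Metric.mem_closedBall] at hw
      calc dist w z ≤ dist w q + dist q z := dist_triangle w q z
        _ ≤ (ρ:ℝ) + ε/3 := by
            have : dist q z = dist z q := dist_comm q z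
            rw [this] at *
            exact add_le_add hw (le_of_lt hqz)
        _ < ε/2 + ε/2 := by
            have h3 : (ε:ℝ)/3 < ε/2 := by linarith
            exact add_lt_add_of_lt_of_le hρ2 (le_of_lt h3)
        _ = ε := by ring
  by_cases h0U : (0:V) ∈ U
  · have : df ⁻¹' U = (E ∩ W) ∪ Eᶜ := by
      ext x
      simp only [Set.mem_preimage, Set.mem_union, Set.mem_inter_iff, Set.mem_compl_iff]
      constructor
      · intro hxU
        by_cases hxE : x ∈ E
        · left
          refine ⟨hxE, ?_⟩
          obtain ⟨q, hqD, ρ, hzball, hsub⟩ := hcover (df x) hxU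
          rw [hW]
          simp only [Set.mem_iUnion]
          exact ⟨q, hqD, ρ, hsub, ⟨df x, ⟨hzball, by
            simpa [Metric.mem_closedBall, dist_zero_right] using hnorm x hxE⟩,
            hzero x hxE⟩⟩
        · right; exact hxE
      · rintro (⟨hxE, hxW⟩ | hxE)
        · rw [hW] at hxW
          simp only [Set.mem_iUnion] at hxW
          obtain ⟨q, _, ρ, hsub, c, hcmem, hc0⟩ := hxW
          have : c = df x := huniq x hxE c (df x) hc0 (hzero x hxE)
          rw [← this]
          exact hsub hcmem.1
        · rw [hdf0 x hxE]
          exact h0U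
    rw [this]
    exact (hE.inter hWmeas).union hE.compl
  · have : df ⁻¹' U = E ∩ W := by
      ext x
      simp only [Set.mem_preimage, Set.mem_inter_iff]
      constructor
      · intro hxU
        by_cases hxE : x ∈ E
        · refine ⟨hxE, ?_⟩
          obtain ⟨q, hqD, ρ, hzball, hsub⟩ := hcover (df x) hxU
          rw [hW]
          simp only [Set.mem_iUnion]
          exact ⟨q, hqD, ρ, hsub, ⟨df x, ⟨hzball, by
            simpa [Metric.mem_closedBall, dist_zero_right] using hnorm x hxE⟩,
            hzero x hxE⟩⟩
        · exfalso
          rw [hdf0 x hxE] at hxU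
          exact h0U hxU
      · rintro ⟨hxE, hxW⟩
        rw [hW] at hxW
        simp only [Set.mem_iUnion] at hxW
        obtain ⟨q, _, ρ, hsub, c, hcmem, hc0⟩ := hxW
        have : c = df x := huniq x hxE c (df x) hc0 (hzero x hxE)
        rw [← this]
        exact hsub hcmem.1
    rw [this]
    exact hE.inter hWmeas
end Selection2

/-- quantitatively independent points -/
def Sset {X : Type*} [MetricSpace X] {N : ℕ} (φ : Fin N → X → ℝ) (m : ℕ) : Set X :=
  {x | ∀ l : Fin N → ℝ, ‖l‖ = 1 → 1 / (m + 1) ≤ lipUp (mulSum l φ) x}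

lemma lipUp_mulSum_unit_zero {X : Type*} [MetricSpace X] {N : ℕ} {φ : Fin N → X → ℝ}
    {K : Fin N → ℝ≥0}
    (hφ : ∀ i, LipschitzWith (K i) (φ i)) {x : X} {l : Fin N → ℝ} (hl : l ≠ 0)
    (h : lipUp (mulSum l φ) x = 0) :
    lipUp (mulSum (‖l‖⁻¹ • l) φ) x = 0 := by
  have hnorm : ‖l‖ ≠ 0 := norm_ne_zero_iff.mpr hl
  have e : mulSum (‖l‖⁻¹ • l) φ = fun y => ‖l‖⁻¹ * mulSum l φ y := by
    funext y
    simp [mulSum, Finset.mul_sum, mul_assoc]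
  rw [e]
  have h1 := lipUp_smul_le' (x := x) (lipschitzWith_mulSum' l φ K hφ) ‖l‖⁻¹
  rw [h, mul_zero] at h1
  exact le_antisymm h1
    (lipUp_nonneg' ((lipschitzWith_mulSum' l φ K hφ).constMulReal' ‖l‖⁻¹))


section Patch
variable {X : Type*} [MetricSpace X] [MeasurableSpace X] [BorelSpace X]

lemma measurableSet_Sset {N : ℕ} (φ : Fin N → X → ℝ) (K : Fin N → ℝ≥0)
    (hφ : ∀ i, LipschitzWith (K i) (φ i)) (m : ℕ) : MeasurableSet (Sset φ m) := by
  rcases (Metric.sphere (0 : Fin N → ℝ) 1).eq_empty_or_nonempty with hemp | hne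
  · have : Sset φ m = Set.univ := by
      ext x
      simp only [Sset, Set.mem_setOf_eq, Set.mem_univ, iff_true]
      intro l hl
      exact absurd (mem_sphere_zero_iff_norm.mpr hl) (by rw [hemp]; exact Set.notMem_empty l)
    rw [this]; exact MeasurableSet.univ
  · haveI : Nonempty (Metric.sphere (0 : Fin N → ℝ) 1) := hne.to_subtype
    obtain ⟨u, hu⟩ := TopologicalSpace.exists_dense_seq (Metric.sphere (0 : Fin N → ℝ) 1)
    have key : Sset φ m = ⋂ n, {x | 1 / (m + 1) ≤ lipUp (mulSum ((u n : Fin N → ℝ)) φ) x} := by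
      ext x
      simp only [Sset, Set.mem_setOf_eq, Set.mem_iInter]
      constructor
      · intro h n
        exact h _ (mem_sphere_zero_iff_norm.mp (u n).2)
      · intro h l hl
        -- density + continuity
        by_contra hcon
        push_neg at hcon
        have hcont := (continuous_lipUp_mulSum' (x := x) φ K hφ).continuousAt (x := l)
        have : ∀ᶠ l' in nhds l, lipUp (mulSum l' φ) x < 1 / (m + 1) :=
          hcont.eventually_lt continuousAt_const hcon
        obtain ⟨ε, hε, hball⟩ := Metric.eventually_nhds_iff_ball.mp this
        obtain ⟨n, hn⟩ := hu.exists_dist_lt (⟨l, mem_sphere_zero_iff_norm.mpr hl⟩ :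
          Metric.sphere (0 : Fin N → ℝ) 1) hε
        rw [Subtype.dist_eq] at hn
        have := hball (u n) (by simpa [Metric.mem_ball, dist_comm] using hn)
        exact absurd (h n) (not_le.mpr this)
    rw [key]
    apply MeasurableSet.iInter
    intro n
    have : Measurable (fun x => lipUp (mulSum ((u n : Fin N → ℝ)) φ) x) :=
      measurable_lipUp' (lipschitzWith_mulSum' _ φ K hφ)
    exact this measurableSet_Ici

lemma Sset_zero (φ : Fin 0 → X → ℝ) (m : ℕ) : Sset φ m = Set.univ := by
  ext x
  simp only [Sset, Set.mem_setOf_eq, Set.mem_univ, iff_true]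
  intro l hl
  exfalso
  have hz : l = 0 := Subsingleton.elim l 0
  rw [hz, norm_zero] at hl
  norm_num at hl

end Patch

section Pointwise
variable {X : Type*} [MetricSpace X]
set_option linter.unusedSectionVars false

/-- `lipUp` bound for a difference rearrangement:
`lipUp (mulSum (c - c') φ) x ≤ F x c + F x c'` where `F x c := lipUp (f - mulSum c φ) x`. -/
lemma lipUp_mulSum_diff_le {N : ℕ} {φ : Fin N → X → ℝ} {K : Fin N → ℝ≥0}
    (hφ : ∀ i, LipschitzWith (K i) (φ i)) {f : X → ℝ} {Kf : ℝ≥0} (hf : LipschitzWith Kf f)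
    (x : X) (c c' : Fin N → ℝ) :
    lipUp (mulSum (c - c') φ) x ≤
      lipUp (fun y => f y - mulSum c' φ y) x + lipUp (fun y => f y - mulSum c φ y) x := by
  have hc : LipschitzWith (Kf + ∑ i, Real.nnabs (c i) * K i) (fun y => f y - mulSum c φ y) := by
    have := hf.sub (lipschitzWith_mulSum' c φ K hφ)
    exact this
  have hc' : LipschitzWith (Kf + ∑ i, Real.nnabs (c' i) * K i)
      (fun y => f y - mulSum c' φ y) := hf.sub (lipschitzWith_mulSum' c' φ K hφ)
  have hneg : LipschitzWith (Real.nnabs (-1) * (Kf + ∑ i, Real.nnabs (c i) * K i))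
      (fun y => (-1 : ℝ) * (f y - mulSum c φ y)) := hc.constMulReal' (-1)
  have key := lipUp_add_le' (x := x) hc' hneg
  have e : (fun y => (f y - mulSum c' φ y) + (-1 : ℝ) * (f y - mulSum c φ y))
      = mulSum (c - c') φ := by
    funext y
    simp only [mulSum, Pi.sub_apply, sub_mul, Finset.sum_sub_distrib]
    ring
  rw [e] at key
  refine key.trans ?_
  have hneg2 : lipUp (fun y => (-1 : ℝ) * (f y - mulSum c φ y)) x ≤
      |(-1 : ℝ)| * lipUp (fun y => f y - mulSum c φ y) x := lipUp_smul_le' hc (-1)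
  have hneg3 : lipUp (fun y => (-1 : ℝ) * (f y - mulSum c φ y)) x ≤
      lipUp (fun y => f y - mulSum c φ y) x := by
    rw [abs_neg, abs_one, one_mul] at hneg2
    exact hneg2
  exact add_le_add le_rfl hneg3

/-- On quantitatively independent points the coefficients are unique and bounded. -/
lemma unique_coeff_at {N : ℕ} {φ : Fin N → X → ℝ} {K : Fin N → ℝ≥0}
    (hφ : ∀ i, LipschitzWith (K i) (φ i)) {f : X → ℝ} {Kf : ℝ≥0} (hf : LipschitzWith Kf f)
    {m : ℕ} {x : X} (hx : x ∈ Sset φ m) :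
    (∀ c c' : Fin N → ℝ, lipUp (fun y => f y - mulSum c φ y) x = 0 →
      lipUp (fun y => f y - mulSum c' φ y) x = 0 → c = c') ∧
    (∀ c : Fin N → ℝ, lipUp (fun y => f y - mulSum c φ y) x = 0 → ‖c‖ ≤ (m + 1) * Kf) := by
  constructor
  · intro c c' h h'
    by_contra hne
    have hd : c - c' ≠ 0 := sub_ne_zero.mpr hne
    have h0 : lipUp (mulSum (c - c') φ) x = 0 := by
      have h1 := lipUp_mulSum_diff_le hφ hf x c c'
      rw [h, h', add_zero] at h1
      exact le_antisymm h1 (lipUp_nonneg' (lipschitzWith_mulSum' _ φ K hφ))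
    have hunit := lipUp_mulSum_unit_zero hφ hd h0
    have hn1 : ‖(‖c - c'‖⁻¹ • (c - c'))‖ = 1 := by
      rw [norm_smul, norm_inv, norm_norm]
      field_simp [norm_ne_zero_iff.mpr hd]
    have := hx _ hn1
    rw [hunit] at this
    have : (0:ℝ) < 1 / (m + 1) := by positivity
    linarith [hx _ hn1, hunit]
  · intro c h
    rcases eq_or_ne c 0 with rfl | hc
    · simp [norm_zero]
      positivity
    -- lipUp (mulSum c φ) x ≤ Kf
    have hb : lipUp (mulSum c φ) x ≤ Kf := by
      have h1 := lipUp_mulSum_diff_le hφ hf x c 0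
      have e0 : mulSum (0 : Fin N → ℝ) φ = fun _ => (0:ℝ) := by
        funext y; simp [mulSum]
      have h2 : lipUp (fun y => f y - mulSum (0 : Fin N → ℝ) φ y) x = lipUp f x := by
        congr 1
        funext y
        rw [e0]
        ring_nf
      rw [sub_zero] at h1
      rw [h2, h] at h1
      rw [add_zero] at h1
      exact h1.trans (lipUp_le' hf)
    -- quantitative independence lower bound
    have hunit : ‖(‖c‖⁻¹ • c)‖ = 1 := by
      rw [norm_smul, norm_inv, norm_norm]
      field_simp [norm_ne_zero_iff.mpr hc]
    have hlow := hx _ hunit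
    have e : mulSum (‖c‖⁻¹ • c) φ = fun y => ‖c‖⁻¹ * mulSum c φ y := by
      funext y
      simp [mulSum, Finset.mul_sum, mul_assoc]
    have hup : lipUp (mulSum (‖c‖⁻¹ • c) φ) x ≤ ‖c‖⁻¹ * Kf := by
      rw [e]
      have := lipUp_smul_le' (x := x) (lipschitzWith_mulSum' c φ K hφ) ‖c‖⁻¹
      refine this.trans ?_
      rw [abs_of_nonneg (by positivity)]
      exact mul_le_mul_of_nonneg_left hb (by positivity)
    have hcpos : (0:ℝ) < ‖c‖ := norm_pos_iff.mpr hc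
    have h3 : 1 / (m + 1) ≤ ‖c‖⁻¹ * Kf := le_trans hlow hup
    rw [div_le_iff₀ (by positivity : (0:ℝ) < (m:ℝ) + 1)] at h3
    have h4 : ‖c‖ * (1 : ℝ) ≤ ‖c‖ * (‖c‖⁻¹ * Kf * (m + 1)) := by
      apply mul_le_mul_of_nonneg_left _ (le_of_lt hcpos)
      linarith
    rw [mul_one] at h4
    have h5 : ‖c‖ * (‖c‖⁻¹ * Kf * (m + 1)) = Kf * (m+1) := by
      field_simp
    rw [h5] at h4
    linarith
end Pointwise

section Good
variable {X : Type*} [MetricSpace X] [MeasurableSpace X] [BorelSpace X]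

/-- `R` contains a positive-measure quantitatively independent set for some `N`-tuple. -/
def GoodN (μ : Measure X) (R : Set X) (N : ℕ) : Prop :=
  ∃ φ : Fin N → X → ℝ, (∀ k, IsLip (φ k)) ∧ ∃ m : ℕ, 0 < μ (R ∩ Sset φ m)

lemma goodN_zero {μ : Measure X} {R : Set X} (hpos : 0 < μ R) : GoodN μ R 0 := by
  refine ⟨fun i => i.elim0, fun k => k.elim0, 0, ?_⟩
  rw [Sset_zero, Set.inter_univ]
  exact hpos

lemma not_goodN_of_ae_dependent {μ : Measure X} {R : Set X} {N : ℕ}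
    (hdep : ∀ φ : Fin N → X → ℝ, (∀ k, IsLip (φ k)) → ∀ᵐ x ∂μ, DependentAt φ x) :
    ¬ GoodN μ R N := by
  rintro ⟨φ, hLip, m, hpos⟩
  classical
  set K : Fin N → ℝ≥0 := fun k => (hLip k).choose with hK
  have hφ : ∀ k, LipschitzWith (K k) (φ k) := fun k => (hLip k).choose_spec
  have hae := hdep φ hLip
  have hnull : μ {x | ¬ DependentAt φ x} = 0 := by
    rw [← MeasureTheory.ae_iff]
    exact hae
  -- find a point in the intersection
  have hsub : ¬ (R ∩ Sset φ m ⊆ {x | ¬ DependentAt φ x}) := by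
    intro hsub
    exact absurd (measure_mono_null hsub hnull) (ne_of_gt hpos)
  obtain ⟨x, hxA, hxdep⟩ := Set.not_subset.mp hsub
  simp only [Set.mem_setOf_eq, not_not] at hxdep
  obtain ⟨l, hl0, hl⟩ := hxdep
  have hl' : lipUp (mulSum l φ) x = 0 := hl
  have hz := lipUp_mulSum_unit_zero hφ hl0 hl'
  have hn1 : ‖(‖l‖⁻¹ • l)‖ = 1 := by
    rw [norm_smul, norm_inv, norm_norm]
    field_simp [norm_ne_zero_iff.mpr hl0]
  have := hxA.2 _ hn1
  rw [hz] at this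
  have hpos' : (0:ℝ) < 1 / (m + 1) := by positivity
  linarith

lemma chart_of_not_good {μ : Measure X} {R : Set X} {N : ℕ}
    {φ : Fin N → X → ℝ} {K : Fin N → ℝ≥0} (hφ : ∀ k, LipschitzWith (K k) (φ k)) {m : ℕ}
    {f : X → ℝ} {Kf : ℝ≥0} (hf : LipschitzWith Kf f)
    (hngood : ∀ m' : ℕ, μ (R ∩ Sset (Fin.snoc φ f) m') = 0) :
    ∀ᵐ x ∂μ, x ∈ R ∩ Sset φ m → ∃ c : Fin N → ℝ,
      lipUp (fun y => f y - mulSum c φ y) x = 0 := by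
  classical
  set ψ : Fin (N+1) → X → ℝ := Fin.snoc φ f with hψdef
  set Kψ : Fin (N+1) → ℝ≥0 := Fin.snoc K Kf with hKψdef
  have hψ : ∀ i, LipschitzWith (Kψ i) (ψ i) := by
    intro i
    refine Fin.lastCases ?_ ?_ i
    · simp only [hψdef, hKψdef, Fin.snoc_last]
      exact hf
    · intro j
      simp only [hψdef, hKψdef, Fin.snoc_castSucc]
      exact hφ j
  have hbad : μ (⋃ m' : ℕ, R ∩ Sset ψ m') = 0 :=
    measure_iUnion_null (fun m' => hngood m')
  have hae : ∀ᵐ x ∂μ, x ∉ ⋃ m' : ℕ, R ∩ Sset ψ m' :=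
    measure_eq_zero_iff_ae_notMem.mp hbad
  filter_upwards [hae] with x hx hxRS
  -- x ∈ R, x ∈ Sset φ m, and for each m' not in Sset ψ m'
  have hnot : ∀ m' : ℕ, ∃ l : Fin (N+1) → ℝ, ‖l‖ = 1 ∧
      lipUp (mulSum l ψ) x < 1 / (m' + 1) := by
    intro m'
    have : x ∉ Sset ψ m' := by
      intro hmem
      exact hx (Set.mem_iUnion.mpr ⟨m', hxRS.1, hmem⟩)
    simp only [Sset, Set.mem_setOf_eq, not_forall, not_le] at this
    obtain ⟨l, hl1, hl2⟩ := this
    exact ⟨l, hl1, hl2⟩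
  -- compactness: attain zero on the sphere
  obtain ⟨lstar, hlsph, hlzero⟩ : ∃ l ∈ Metric.sphere (0 : Fin (N+1) → ℝ) 1,
      lipUp (mulSum l ψ) x = 0 := by
    apply exists_zero_of_forall_lt' (isCompact_sphere 0 1)
    · exact NormedSpace.sphere_nonempty.mpr zero_le_one
    · exact continuous_lipUp_mulSum' ψ Kψ hψ
    · intro c
      exact lipUp_nonneg' (lipschitzWith_mulSum' c ψ Kψ hψ)
    · intro m'
      obtain ⟨l, hl1, hl2⟩ := hnot m'
      exact ⟨l, mem_sphere_zero_iff_norm.mpr hl1, hl2⟩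
  have hlnorm : ‖lstar‖ = 1 := mem_sphere_zero_iff_norm.mp hlsph
  set a : ℝ := lstar (Fin.last N) with ha
  set l' : Fin N → ℝ := Fin.init lstar with hl'
  -- the key identity
  have hiden : ∀ y, mulSum lstar ψ y = mulSum l' φ y + a * f y := by
    intro y
    rw [mulSum, Fin.sum_univ_castSucc]
    simp only [hψdef, Fin.snoc_castSucc, Fin.snoc_last]
    rfl
  rcases eq_or_ne a 0 with haz | haz
  · exfalso
    have hl'0 : l' ≠ 0 := by
      intro hl'0
      have : lstar = 0 := by
        rw [← Fin.snoc_init_self lstar]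
        rw [← hl', ← ha, hl'0, haz]
        funext i
        refine Fin.lastCases ?_ ?_ i
        · simp
        · intro j; simp
      rw [this, norm_zero] at hlnorm
      norm_num at hlnorm
    have hzero : lipUp (mulSum l' φ) x = 0 := by
      have e : mulSum l' φ = mulSum lstar ψ := by
        funext y
        rw [hiden y, haz]
        ring
      rw [e]
      exact hlzero
    have hz := lipUp_mulSum_unit_zero hφ hl'0 hzero
    have hn1 : ‖(‖l'‖⁻¹ • l')‖ = 1 := by
      rw [norm_smul, norm_inv, norm_norm]
      field_simp [norm_ne_zero_iff.mpr hl'0]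
    have := hxRS.2 _ hn1
    rw [hz] at this
    have hpos' : (0:ℝ) < 1 / (m + 1) := by positivity
    linarith
  · refine ⟨(-(1:ℝ)/a) • l', ?_⟩
    have e : (fun y => f y - mulSum ((-(1:ℝ)/a) • l') φ y)
        = fun y => (1/a) * mulSum lstar ψ y := by
      funext y
      have h1 : mulSum ((-(1:ℝ)/a) • l') φ y = (-(1:ℝ)/a) * mulSum l' φ y := by
        simp [mulSum, Finset.mul_sum, mul_assoc]
      rw [h1, hiden y]
      field_simp
      ring
    rw [e]
    have h1 := lipUp_smul_le' (x := x) (lipschitzWith_mulSum' lstar ψ Kψ hψ) (1/a)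
    rw [hlzero, mul_zero] at h1
    exact le_antisymm h1
      (lipUp_nonneg' ((lipschitzWith_mulSum' lstar ψ Kψ hψ).constMulReal' (1/a)))
end Good

section Step1
variable {X : Type*} [MetricSpace X] [MeasurableSpace X] [BorelSpace X]

lemma isLip_snoc {N : ℕ} {φ : Fin N → X → ℝ} (hLip : ∀ k, IsLip (φ k)) {f : X → ℝ}
    (hf : IsLip f) : ∀ k, IsLip ((Fin.snoc φ f : Fin (N+1) → X → ℝ) k) := by
  intro k
  refine Fin.lastCases ?_ ?_ k
  · simpa only [Fin.snoc_last] using hf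
  · intro j; simpa only [Fin.snoc_castSucc] using hLip j

lemma exists_patch (μ : Measure X) (N₀ : ℕ)
    (hdim : ∀ f : Fin (N₀ + 1) → X → ℝ, (∀ i, IsLip (f i)) →
      ∀ᵐ x ∂μ, DependentAt f x)
    {R : Set X} (hpos : 0 < μ R) :
    ∃ (N : ℕ) (φ : Fin N → X → ℝ) (m : ℕ), N ≤ N₀ ∧ (∀ k, IsLip (φ k)) ∧
      0 < μ (R ∩ Sset φ m) ∧
      (∀ f : X → ℝ, IsLip f →
        ∀ᵐ x ∂μ, x ∈ R ∩ Sset φ m → ∃ c : Fin N → ℝ,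
          lipUp (fun y => f y - mulSum c φ y) x = 0) := by
  classical
  set P : ℕ → Prop := GoodN μ R with hP
  have h0 : P 0 := goodN_zero hpos
  set Nstar := Nat.findGreatest P N₀ with hNs
  have hgood : P Nstar := Nat.findGreatest_spec (Nat.zero_le N₀) h0
  have hle : Nstar ≤ N₀ := Nat.findGreatest_le N₀
  obtain ⟨φ, hLip, m, hposS⟩ := hgood
  have hnot : ¬ P (Nstar + 1) := by
    rcases eq_or_lt_of_le hle with heq | hlt
    · rw [heq]
      exact not_goodN_of_ae_dependent (fun ψ hψ => hdim ψ hψ)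
    · exact Nat.findGreatest_is_greatest (Nat.lt_succ_self Nstar) hlt
  refine ⟨Nstar, φ, m, hle, hLip, hposS, ?_⟩
  intro f hf
  set K : Fin Nstar → ℝ≥0 := fun k => (hLip k).choose with hK
  have hφ : ∀ k, LipschitzWith (K k) (φ k) := fun k => (hLip k).choose_spec
  obtain ⟨Kf, hKf⟩ := hf
  apply chart_of_not_good hφ hKf
  intro m'
  by_contra hne
  have hposS' : 0 < μ (R ∩ Sset (Fin.snoc φ f) m') :=
    lt_of_le_of_ne zero_le (Ne.symm hne)
  exact hnot ⟨Fin.snoc φ f, isLip_snoc hLip ⟨Kf, hKf⟩, m', hposS'⟩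

lemma patch_differential (μ : Measure X) {N : ℕ} {φ : Fin N → X → ℝ} {K : Fin N → ℝ≥0}
    (hφ : ∀ k, LipschitzWith (K k) (φ k)) {m : ℕ} {S : Set X} (hS : MeasurableSet S)
    (hSsub : S ⊆ Sset φ m)
    (hchart : ∀ f : X → ℝ, IsLip f → ∀ᵐ x ∂μ, x ∈ S → ∃ c : Fin N → ℝ,
        lipUp (fun y => f y - mulSum c φ y) x = 0)
    (f : X → ℝ) (hf : IsLip f) :
    ∃ df : X → (Fin N → ℝ), Measurable df ∧
      (∀ᵐ x ∂μ.restrict S, lipUp (fun y => f y - mulSum (df x) φ y) x = 0) ∧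
      ∀ dg : X → (Fin N → ℝ),
        (∀ᵐ x ∂μ.restrict S, lipUp (fun y => f y - mulSum (dg x) φ y) x = 0) →
        (∀ᵐ x ∂μ.restrict S, df x = dg x) := by
  classical
  obtain ⟨Kf, hKf⟩ := hf
  set F : X → (Fin N → ℝ) → ℝ := fun x c => lipUp (fun y => f y - mulSum c φ y) x with hF
  have hLipc : ∀ c : Fin N → ℝ,
      LipschitzWith (Kf + ∑ i, Real.nnabs (c i) * K i) (fun y => f y - mulSum c φ y) :=
    fun c => hKf.sub (lipschitzWith_mulSum' c φ K hφ)
  have hFx : ∀ c, Measurable (fun x => F x c) := fun c => measurable_lipUp' (hLipc c)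
  have h0 : ∀ x c, 0 ≤ F x c := fun x c => lipUp_nonneg' (hLipc c)
  -- Lipschitz in `c`
  have hFlip : ∀ x, ∀ c c' : Fin N → ℝ, F x c - F x c' ≤ ‖c - c'‖ * ∑ i, (K i : ℝ) := by
    intro x c c'
    have hdiff : LipschitzWith (∑ i, Real.nnabs ((c' - c) i) * K i)
        (fun y => (f y - mulSum c φ y) - (f y - mulSum c' φ y)) := by
      have e : (fun y => (f y - mulSum c φ y) - (f y - mulSum c' φ y))
          = mulSum (c' - c) φ := by
        funext y
        simp only [mulSum, Pi.sub_apply, sub_mul, Finset.sum_sub_distrib]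
        ring
      rw [e]
      exact lipschitzWith_mulSum' (c' - c) φ K hφ
    have h1 := lipUp_le_add_sub' (x := x) (hLipc c') hdiff
    have e : (fun y => (f y - mulSum c φ y) - (f y - mulSum c' φ y))
        = mulSum (c' - c) φ := by
      funext y
      simp only [mulSum, Pi.sub_apply, sub_mul, Finset.sum_sub_distrib]
      ring
    rw [e] at h1
    have h2 : lipUp (mulSum (c' - c) φ) x ≤ ‖c' - c‖ * ∑ i, (K i : ℝ) :=
      lipUp_mulSum_le' (c' - c) φ K hφ
    have h3 : ‖c' - c‖ = ‖c - c'‖ := by rw [← norm_neg]; congr 1; ring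
    rw [h3] at h2
    have := h1.trans (add_le_add le_rfl h2)
    linarith [this]
  have hFc : ∀ x, Continuous (F x) := by
    intro x
    have : LipschitzWith ⟨∑ i, (K i : ℝ), by positivity⟩ (F x) := by
      apply LipschitzWith.of_dist_le_mul
      intro c c'
      rw [Real.dist_eq, dist_eq_norm]
      rw [abs_sub_le_iff]
      constructor
      · exact (hFlip x c c').trans (by rw [mul_comm]; exact le_rfl)
      · refine (hFlip x c' c).trans ?_
        rw [show c' - c = -(c - c') by ring, norm_neg, mul_comm]
        exact le_rfl
    exact this.continuous
  set M : ℝ := (m + 1) * Kf with hM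
  set E : Set X := S ∩ {x | ∃ c ∈ Metric.closedBall (0 : Fin N → ℝ) M, F x c = 0} with hE
  have hEmeas : MeasurableSet E :=
    hS.inter (measurableSet_exists_zero' (isCompact_closedBall _ _) hFx hFc h0)
  have hex : ∀ x ∈ E, ∃ c : Fin N → ℝ, ‖c‖ ≤ M ∧ F x c = 0 := by
    rintro x ⟨_, c, hcball, hc0⟩
    exact ⟨c, mem_closedBall_zero_iff.mp hcball, hc0⟩
  have huniq : ∀ x ∈ E, ∀ c c' : Fin N → ℝ, F x c = 0 → F x c' = 0 → c = c' := by
    rintro x ⟨hxS, _⟩ c c' hc hc'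
    exact (unique_coeff_at hφ hKf (hSsub hxS)).1 c c' hc hc'
  obtain ⟨df, hdfmeas, hdfzero, _⟩ :=
    measurable_unique_zero_selection' hEmeas M hFx hFc h0 hex huniq
  refine ⟨df, hdfmeas, ?_, ?_⟩
  · -- a.e. differential
    have hchartS := hchart f ⟨Kf, hKf⟩
    filter_upwards [ae_restrict_mem hS, ae_restrict_of_ae hchartS] with x hxS hx
    obtain ⟨c, hc⟩ := hx hxS
    have hcb : ‖c‖ ≤ M := (unique_coeff_at hφ hKf (hSsub hxS)).2 c hc
    have hxE : x ∈ E := ⟨hxS, c, mem_closedBall_zero_iff.mpr hcb, hc⟩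
    exact hdfzero x hxE
  · intro dg hdg
    have hchartS := hchart f ⟨Kf, hKf⟩
    filter_upwards [ae_restrict_mem hS, ae_restrict_of_ae hchartS, hdg] with x hxS hx hdgx
    obtain ⟨c, hc⟩ := hx hxS
    have hcb : ‖c‖ ≤ M := (unique_coeff_at hφ hKf (hSsub hxS)).2 c hc
    have hxE : x ∈ E := ⟨hxS, c, mem_closedBall_zero_iff.mpr hcb, hc⟩
    have hdfx : F x (df x) = 0 := hdfzero x hxE
    exact (unique_coeff_at hφ hKf (hSsub hxS)).1 (df x) (dg x) hdfx hdgx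
end Step1

section Assembly
variable {X : Type*} [MetricSpace X] [MeasurableSpace X] [BorelSpace X]

/-- A coordinate patch. -/
def IsPatch (μ : Measure X) (N₀ : ℕ) (S : Set X) : Prop :=
  MeasurableSet S ∧ 0 < μ S ∧
  ∃ (N : ℕ) (φ : Fin N → X → ℝ) (m : ℕ), N ≤ N₀ ∧ (∀ k, IsLip (φ k)) ∧
    S ⊆ Sset φ m ∧
    (∀ f : X → ℝ, IsLip f → ∀ᵐ x ∂μ, x ∈ S → ∃ c : Fin N → ℝ,
      lipUp (fun y => f y - mulSum c φ y) x = 0)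

lemma exists_patch_subset (μ : Measure X) (N₀ : ℕ)
    (hdim : ∀ f : Fin (N₀ + 1) → X → ℝ, (∀ i, IsLip (f i)) →
      ∀ᵐ x ∂μ, DependentAt f x)
    {R : Set X} (hR : MeasurableSet R) (hpos : 0 < μ R) :
    ∃ S, S ⊆ R ∧ IsPatch μ N₀ S := by
  classical
  obtain ⟨N, φ, m, hle, hLip, hposS, hchart⟩ := exists_patch μ N₀ hdim hpos
  set K : Fin N → ℝ≥0 := fun k => (hLip k).choose with hK
  have hφ : ∀ k, LipschitzWith (K k) (φ k) := fun k => (hLip k).choose_spec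
  refine ⟨R ∩ Sset φ m, Set.inter_subset_left, ?_, hposS, N, φ, m, hle, hLip,
    Set.inter_subset_right, hchart⟩
  exact hR.inter (measurableSet_Sset φ K hφ m)

theorem main_construction (μ : Measure X) [SigmaFinite μ] (N₀ : ℕ)
    (hdim : ∀ f : Fin (N₀ + 1) → X → ℝ, (∀ i, IsLip (f i)) →
      ∀ᵐ x ∂μ, DependentAt f x) :
    HasMDS μ N₀ := by
  classical
  -- maximal disjoint family of patches
  set 𝔖 : Set (Set (Set X)) :=
    {𝒟 | (∀ S ∈ 𝒟, IsPatch μ N₀ S) ∧ 𝒟.PairwiseDisjoint id} with h𝔖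
  obtain ⟨𝒟, h𝒟max⟩ := zorn_subset 𝔖 (by
    intro c hc hchain
    refine ⟨⋃₀ c, ⟨?_, ?_⟩, fun s hs => Set.subset_sUnion_of_mem hs⟩
    · rintro S ⟨t, htc, hSt⟩
      exact (hc htc).1 S hSt
    · intro A hA B hB hAB
      obtain ⟨tA, htA, hAt⟩ := hA
      obtain ⟨tB, htB, hBt⟩ := hB
      rcases hchain.total htA htB with h | h
      · exact (hc htB).2 (h hAt) hBt hAB
      · exact (hc htA).2 hAt (h hBt) hAB)
  have h𝒟 : 𝒟 ∈ 𝔖 := h𝒟max.prop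
  have hpatches : ∀ S ∈ 𝒟, IsPatch μ N₀ S := h𝒟.1
  -- countability
  have hcnt : 𝒟.Countable := by
    rw [← Set.countable_coe_iff]
    have hmble : ∀ D : ↥𝒟, MeasurableSet (D : Set X) :=
      fun D => (hpatches D D.2).1
    have hdisj : Pairwise (Function.onFun Disjoint (fun D : ↥𝒟 => (D : Set X))) := by
      intro i j hij
      exact h𝒟.2 i.2 j.2 (Subtype.coe_injective.ne hij)
    have := MeasureTheory.Measure.countable_meas_pos_of_disjoint_iUnion
      (μ := μ) hmble hdisj
    have huniv : {i : ↥𝒟 | 0 < μ (i : Set X)} = Set.univ := by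
      ext i
      simp only [Set.mem_setOf_eq, Set.mem_univ, iff_true]
      exact (hpatches i i.2).2.1
    rw [huniv] at this
    exact Set.countable_univ_iff.mp this
  haveI hcnt' : Countable ↥𝒟 := Set.countable_coe_iff.mpr hcnt
  -- a.e. covering
  have hcover : μ (Set.univ \ ⋃₀ 𝒟) = 0 := by
    by_contra hne
    have hRmeas : MeasurableSet (Set.univ \ ⋃₀ 𝒟) := by
      apply MeasurableSet.univ.diff
      rw [Set.sUnion_eq_iUnion]
      exact MeasurableSet.iUnion (fun D => (hpatches D D.2).1)
    have hRpos : 0 < μ (Set.univ \ ⋃₀ 𝒟) := lt_of_le_of_ne zero_le (Ne.symm hne)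
    obtain ⟨S₀, hS₀sub, hS₀patch⟩ := exists_patch_subset μ N₀ hdim hRmeas hRpos
    have hS₀ne : S₀.Nonempty := by
      rcases Set.eq_empty_or_nonempty S₀ with rfl | h
      · exact absurd hS₀patch.2.1 (by simp)
      · exact h
    have hS₀new : S₀ ∉ 𝒟 := by
      intro hmem
      obtain ⟨x, hx⟩ := hS₀ne
      exact (hS₀sub hx).2 (Set.mem_sUnion.mpr ⟨S₀, hmem, hx⟩)
    have hbig : insert S₀ 𝒟 ∈ 𝔖 := by
      constructor
      · rintro S (rfl | hS)
        · exact hS₀patch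
        · exact hpatches S hS
      · apply (h𝒟.2).insert
        intro T hT _
        rw [Set.disjoint_left]
        intro x hxS₀ hxT
        exact (hS₀sub hxS₀).2 (Set.mem_sUnion.mpr ⟨T, hT, hxT⟩)
    have := h𝒟max.2 hbig (Set.subset_insert S₀ 𝒟)
    exact hS₀new (this (Set.mem_insert S₀ 𝒟))
  -- enumerate
  rcases Set.eq_empty_or_nonempty 𝒟 with hempty | hne
  · refine ⟨Empty, inferInstance, fun i => i.elim, fun i => i.elim, fun i => i.elim,
      fun i => i.elim, ?_, fun i => i.elim, fun i => i.elim, fun f _ i => i.elim⟩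
    rw [hempty] at hcover
    simpa using hcover
  obtain ⟨g, hg⟩ := Set.Countable.exists_eq_range hcnt hne
  have hgmem : ∀ n, g n ∈ 𝒟 := by
    intro n
    rw [hg]
    exact Set.mem_range_self n
  have hdata : ∀ n : ℕ, ∃ (N : ℕ) (φ : Fin N → X → ℝ) (m : ℕ), N ≤ N₀ ∧
      (∀ k, IsLip (φ k)) ∧ (g n ⊆ Sset φ m) ∧
      (∀ f : X → ℝ, IsLip f → ∀ᵐ x ∂μ, x ∈ g n → ∃ c : Fin N → ℝ,
        lipUp (fun y => f y - mulSum c φ y) x = 0) :=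
    fun n => (hpatches (g n) (hgmem n)).2.2
  choose N φ m hNle hLip hsub hchart using hdata
  refine ⟨ℕ, inferInstance, g, N, φ, ?_, ?_, hNle, hLip, ?_⟩
  · intro n
    exact ⟨(hpatches (g n) (hgmem n)).1, (hpatches (g n) (hgmem n)).2.1⟩
  · have : ⋃ n, g n = ⋃₀ 𝒟 := by
      rw [hg, Set.sUnion_range]
    rw [this]
    exact hcover
  · intro f hf n
    set K : Fin (N n) → ℝ≥0 := fun k => (hLip n k).choose with hK
    have hφn : ∀ k, LipschitzWith (K k) (φ n k) := fun k => (hLip n k).choose_spec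
    obtain ⟨df, hdfmeas, hdfae, hdfuniq⟩ := patch_differential μ hφn
      (hpatches (g n) (hgmem n)).1 (hsub n) (hchart n) f hf
    refine ⟨df, hdfmeas, hdfae, ?_⟩
    intro dg _ hdg
    exact hdfuniq dg hdg
end Assembly


/-- if the differentials have dimension at most `N₀` (every `(N₀+1)`-tuple of
Lipschitz functions is dependent to first order almost everywhere), then `X` admits a
measurable differentiable structure of dimension at most `N₀`. -/
theorem finite_dimensionality_implies_measurable_differentiable_structure
    (X : Type*) [MetricSpace X] [MeasurableSpace X] [BorelSpace X]
    (μ : Measure X) [SigmaFinite μ] (Cμ : ℝ≥0) (hdoub : DoublingWith μ Cμ)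
    (N₀ : ℕ)
    (hdim : ∀ f : Fin (N₀ + 1) → X → ℝ, (∀ i, IsLip (f i)) →
      ∀ᵐ x ∂μ, DependentAt f x) :
    HasMDS μ N₀ := by
  exact main_construction μ N₀ hdim
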